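/- For any n, k ≥ 0 with T(k)∘ϑ^n ≤ n, the spine satisfies the concatenation identity 𝕊₀ⁿ = [𝕊₀^{n − T(k)∘ϑ^n}, 𝒬(k)∘ϑ^n, …, 𝒬(1)∘ϑ^n]. -/

import Mathlib

open scoped Classical NNReal
noncomputable section

/-- Finite point measures on `(0,∞)`, modeled as multisets of atoms in `ℝ≥0`. -/
abbrev PtM := Multiset ℝ≥0

/-- A stick: a life-length together with a finite point measure of birth times. -/
abbrev Stick := ℝ≥0 × PtM

/-- The space of doubly infinite sequences of sticks. -/
abbrev Om := ℤ → Stick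

/-- The shift operator `θ_n`. -/
def theta (n : ℤ) (ω : Om) : Om := fun k => ω (n + k)

/-- The dual (time-reversal) operator `ϑ^n`. -/
def dual (n : ℤ) (ω : Om) : Om := fun k => ω (n - k - 1)

/-- Life length of the `k`-th individual. -/
def Vc (ω : Om) (k : ℤ) : ℝ≥0 := (ω k).1

/-- Point measure (ages at childbearing) of the `k`-th individual. -/
def Pc (ω : Om) (k : ℤ) : PtM := (ω k).2

/-- The Lukasiewicz path `S`. -/
def Sw (ω : Om) (n : ℤ) : ℤ :=
  if 0 ≤ n then ∑ k ∈ Finset.range n.toNat, ((Multiset.card (Pc ω (k : ℤ)) : ℤ) - 1)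
  else - ∑ k ∈ Finset.range (-n).toNat, ((Multiset.card (Pc ω (-(k : ℤ) - 1)) : ℤ) - 1)

/-- `π(ν)`: the supremum of the support (largest atom) of a finite point measure. -/
def piM (ν : PtM) : ℝ≥0 := ν.sup

/-- `Υ_j(ν)`: removes the `j` largest atoms of `ν`. -/
def upsilon (j : ℕ) (ν : PtM) : PtM :=
  ((ν.sort (· ≤ ·)).take (Multiset.card ν - j) : List ℝ≥0)

/-- The map `Φ` driving the spine process dynamics. -/
def phiSp (Y : List PtM) (ν : PtM) : List PtM :=
  if ν = 0 then
    match Y.reverse.dropWhile (fun m => decide (Multiset.card m < 2)) with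
    | [] => []
    | h :: t => (upsilon 1 h :: t).reverse
  else Y ++ [ν]

/-- The spine process `𝕊₀ⁿ`. -/
def spine (ω : Om) : ℕ → List PtM
  | 0 => []
  | n + 1 => phiSp (spine ω n) (Pc ω (n : ℤ))

/-- `π` extended to finite sequences of point measures. -/
def piL (Y : List PtM) : ℝ≥0 := (Y.map piM).sum

/-- The chronological height process `ℍ(n) = π(𝕊₀ⁿ)`. -/
def Hchr (ω : Om) (n : ℕ) : ℝ≥0 := piL (spine ω n)

/-- The genealogical height process
`𝓗(n) = #{k ∈ {0,…,n−1} : S(k+1) ≤ min_{k+1 ≤ j ≤ n} S(j)}`. -/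
def genH (ω : Om) (n : ℕ) : ℕ :=
  ((Finset.range n).filter
    (fun k : ℕ => ∀ j : ℕ, j ∈ Finset.Icc (k + 1) n → Sw ω ((k : ℤ) + 1) ≤ Sw ω (j : ℤ))).card

/-- Weak ascending ladder height times `T(k)` (valued `⊤` if nonexistent). -/
def ladderT (ω : Om) : ℕ → ℕ∞
  | 0 => 0
  | k + 1 => sInf {x : ℕ∞ | ∃ m j : ℕ, x = (m : ℕ∞) ∧ ladderT ω k = (j : ℕ∞) ∧
      j < m ∧ Sw ω (j : ℤ) ≤ Sw ω (m : ℤ)}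

/-- `T^{-1}(n) = min{k ≥ 0 : T(k) ≥ n}`. -/
def Tinv (ω : Om) (n : ℕ) : ℕ := sInf {k : ℕ | (n : ℕ∞) ≤ ladderT ω k}

/-- `T̃^{-1}(n) = max{k ≥ 0 : T(k) ≤ n}`. -/
def tildeTinv (ω : Om) (n : ℕ) : ℕ := sSup {k : ℕ | ladderT ω k ≤ (n : ℕ∞)}

/-- First passage time upward `τ_ℓ = inf{k > 0 : S(k) ≥ ℓ}`. -/
def tauUp (ω : Om) (ℓ : ℤ) : ℕ∞ :=
  sInf {x : ℕ∞ | ∃ k : ℕ, x = (k : ℕ∞) ∧ 0 < k ∧ ℓ ≤ Sw ω (k : ℤ)}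

/-- First hitting time downward `τ⁻_ℓ = inf{k ≥ 0 : S(k) = −ℓ}`. -/
def tauDown (ω : Om) (ℓ : ℤ) : ℕ∞ :=
  sInf {x : ℕ∞ | ∃ k : ℕ, x = (k : ℕ∞) ∧ Sw ω (k : ℤ) = -ℓ}

/-- `τ_ℓ` as a natural number (junk value `0` when infinite). -/
def tauUpN (ω : Om) (ℓ : ℤ) : ℕ := (tauUp ω ℓ).toNat

/-- The undershoot `ζ_ℓ = ℓ − S(τ_ℓ − 1)`. -/
def zetaU (ω : Om) (ℓ : ℤ) : ℤ := ℓ - Sw ω ((tauUpN ω ℓ : ℤ) - 1)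

/-- `μ_ℓ = Υ_{ζ_ℓ}(𝒫_{τ_ℓ − 1})`. -/
def muU (ω : Om) (ℓ : ℤ) : PtM := upsilon (zetaU ω ℓ).toNat (Pc ω ((tauUpN ω ℓ : ℤ) - 1))

/-- `𝒬(k) = μ₀ ∘ θ_{T(k−1)}`. -/
def Qcal (ω : Om) (k : ℕ) : PtM := muU (theta ((ladderT ω (k - 1)).toNat : ℤ) ω) 0

/-- `𝕐(k) = π(𝒬(k))`. -/
def Ybb (ω : Om) (k : ℕ) : ℝ≥0 := piM (Qcal ω k)

/-- The backward maximum `L(m) = max_{0 ≤ k ≤ m} S(−k)`. -/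
def Lmax (ω : Om) (m : ℕ) : ℤ :=
  Finset.sup' (Finset.range (m + 1)) Finset.nonempty_range_add_one (fun k => Sw ω (-(k : ℤ)))

/-- The ancestor set `𝒜(n) = {n − T(k)∘ϑ^n : k ≥ 0}` (only finite ladder times). -/
def Aset (ω : Om) (n : ℕ) : Set ℤ :=
  {a | ∃ k j : ℕ, ladderT (dual (n : ℤ) ω) k = (j : ℕ∞) ∧ a = (n : ℤ) - (j : ℤ)}

/-- `mrca(m,n) = max(𝒜(m) ∩ 𝒜(n))`. -/
def mrcaZ (ω : Om) (m n : ℕ) : ℤ := sSup (Aset ω m ∩ Aset ω n)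

/-- `χ(m,k) = inf{j ≥ m+1 : S(j) = S(m+1) − k}`. -/
def chiT (ω : Om) (m k : ℕ) : ℕ∞ :=
  sInf {x : ℕ∞ | ∃ j : ℕ, x = (j : ℕ∞) ∧ m + 1 ≤ j ∧
    Sw ω (j : ℤ) = Sw ω ((m : ℤ) + 1) - (k : ℤ)}

/-- `χ(m) = inf{j ≥ m+1 : S(j) = S(m) − 1}`. -/
def chiF (ω : Om) (m : ℕ) : ℕ∞ :=
  sInf {x : ℕ∞ | ∃ j : ℕ, x = (j : ℕ∞) ∧ m + 1 ≤ j ∧ Sw ω (j : ℤ) = Sw ω (m : ℤ) - 1}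

/-- The functional `D_ℓ(𝕊₀^m)` of the spine, expressed through the dual walk:
`D_ℓ = (Σ_{i : 0 < T(i) ≤ min(τ_ℓ, m)} 𝕐(i) − 1_{τ_ℓ ≤ m} π(μ_ℓ)) ∘ ϑ^m`, with `D_0 ≡ 0`. -/
def Dfun (ω : Om) (m : ℕ) (ℓ : ℤ) : ℝ :=
  if ℓ < 1 then 0 else
    (∑ i ∈ (Finset.Icc 1 m).filter
        (fun i => 0 < ladderT (dual (m : ℤ) ω) i ∧
          ladderT (dual (m : ℤ) ω) i ≤ min (tauUp (dual (m : ℤ) ω) ℓ) (m : ℕ∞)),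
      (Ybb (dual (m : ℤ) ω) i : ℝ))
    - (if tauUp (dual (m : ℤ) ω) ℓ ≤ (m : ℕ∞) then (piM (muU (dual (m : ℤ) ω) ℓ) : ℝ) else 0)

/-- `K_j = 2𝒱(j−1) − ℍ(j)`. -/
def Kt (ω : Om) (j : ℕ) : ℝ := 2 * ∑ k ∈ Finset.range j, (Vc ω (k : ℤ) : ℝ) - (Hchr ω j : ℝ)

/-- The chronological contour process: on `[K_n, K_{n+1}]` it increases at rate `+1` from
`ℍ(n)` up to `ℍ(n) + V_n` and then decreases at rate `−1` down to `ℍ(n+1)`. -/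
def contour (ω : Om) (t : ℝ) : ℝ :=
  let n := sSup {j : ℕ | Kt ω j ≤ t}
  min ((Hchr ω n : ℝ) + (t - Kt ω n)) ((Hchr ω (n + 1) : ℝ) + (Kt ω (n + 1) - t))


section Aux

variable {α : Type*}

lemma sort_coe (l : List ℝ≥0) (hl : l.Pairwise (· ≤ ·)) :
    Multiset.sort (↑l : Multiset ℝ≥0) (· ≤ ·) = l :=
  List.Perm.eq_of_pairwise' (Multiset.pairwise_sort _ _) hl
    (Multiset.coe_eq_coe.mp (Multiset.sort_eq _ _))

lemma sorted_take (l : List ℝ≥0) (hl : l.Pairwise (· ≤ ·)) (m : ℕ) :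
    (l.take m).Pairwise (· ≤ ·) :=
  hl.sublist (List.take_sublist m l)

lemma upsilon_card (j : ℕ) (ν : PtM) :
    Multiset.card (upsilon j ν) = Multiset.card ν - j := by
  simp only [upsilon, Multiset.coe_card, List.length_take, Multiset.length_sort]
  omega

lemma upsilon_zero (ν : PtM) : upsilon 0 ν = ν := by
  simp only [upsilon, Nat.sub_zero]
  rw [show Multiset.card ν = (ν.sort (· ≤ ·)).length from (Multiset.length_sort _).symm,
    List.take_length, Multiset.sort_eq]

lemma upsilon_upsilon (a : ℕ) (ν : PtM) : upsilon 1 (upsilon a ν) = upsilon (a + 1) ν := by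
  conv_lhs => rw [upsilon, upsilon]
  rw [sort_coe _ (sorted_take _ (Multiset.pairwise_sort _ _) _)]
  rw [List.take_take, upsilon]
  congr 1
  simp only [Multiset.coe_card, List.length_take, Multiset.length_sort]
  congr 1
  omega

lemma phiSp_ne (Y : List PtM) (ν : PtM) (h : ν ≠ 0) : phiSp Y ν = Y ++ [ν] := by
  simp [phiSp, h]

lemma phiSp_pop_small (Y : List PtM) (ν : PtM) (h : Multiset.card ν < 2) :
    phiSp (Y ++ [ν]) 0 = phiSp Y 0 := by
  simp only [phiSp, if_pos rfl, List.reverse_append, List.reverse_cons, List.reverse_nil,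
    List.nil_append, List.cons_append]
  rw [List.dropWhile_cons_of_pos (by simpa using h)]
  simp

lemma phiSp_pop_big (Y : List PtM) (ν : PtM) (h : 2 ≤ Multiset.card ν) :
    phiSp (Y ++ [ν]) 0 = Y ++ [upsilon 1 ν] := by
  have hp : ¬ (Multiset.card ν < 2) := by omega
  simp only [phiSp, if_pos rfl, List.reverse_append, List.reverse_cons, List.reverse_nil,
    List.nil_append, List.cons_append]
  rw [List.dropWhile_cons_of_neg (by simpa using hp)]
  simp

lemma spine_succ (ω : Om) (m : ℕ) :
    spine ω (m + 1) = phiSp (spine ω m) (Pc ω (m : ℤ)) := rfl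

lemma Sw_coe (ω : Om) (m : ℕ) :
    Sw ω (m : ℤ) = ∑ k ∈ Finset.range m, ((Multiset.card (Pc ω (k : ℤ)) : ℤ) - 1) := by
  simp [Sw]

lemma Sw_zero (ω : Om) : Sw ω 0 = 0 := by simp [Sw]

lemma Sw_succ (ω : Om) (m : ℕ) :
    Sw ω ((m + 1 : ℕ) : ℤ) = Sw ω (m : ℤ) + ((Multiset.card (Pc ω (m : ℤ)) : ℤ) - 1) := by
  rw [Sw_coe, Sw_coe, Finset.sum_range_succ]

lemma spine_congr (ω ω' : Om) (r : ℕ) (h : ∀ i : ℕ, i < r → Pc ω (i : ℤ) = Pc ω' (i : ℤ)) :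
    spine ω r = spine ω' r := by
  induction r with
  | zero => rfl
  | succ m ih =>
    rw [spine_succ, spine_succ, ih (fun i hi => h i (by omega)), h m (by omega)]

lemma Sw_congr (ω ω' : Om) (r : ℕ) (h : ∀ i : ℕ, i < r → Pc ω (i : ℤ) = Pc ω' (i : ℤ)) :
    Sw ω (r : ℤ) = Sw ω' (r : ℤ) := by
  rw [Sw_coe, Sw_coe]
  exact Finset.sum_congr rfl fun i hi => by rw [h i (Finset.mem_range.mp hi)]

lemma Pc_theta (ω : Om) (a m : ℕ) :
    Pc (theta (a : ℤ) ω) (m : ℤ) = Pc ω ((a + m : ℕ) : ℤ) := by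
  simp [Pc, theta]

lemma Sw_theta (ω : Om) (a m : ℕ) :
    Sw (theta (a : ℤ) ω) (m : ℤ) = Sw ω ((a + m : ℕ) : ℤ) - Sw ω (a : ℤ) := by
  induction m with
  | zero => simp [Sw_zero]
  | succ m ih =>
    rw [Sw_succ, ih, Pc_theta, show a + (m + 1) = (a + m) + 1 by omega, Sw_succ]
    ring

lemma Pc_dual (ω : Om) (n m : ℕ) (h : m < n) :
    Pc (dual (n : ℤ) ω) (m : ℤ) = Pc ω ((n - m - 1 : ℕ) : ℤ) := by
  simp only [Pc, dual]
  congr 2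
  omega

lemma Sw_dual (ω : Om) (n m : ℕ) (h : m ≤ n) :
    Sw (dual (n : ℤ) ω) (m : ℤ) = Sw ω (n : ℤ) - Sw ω ((n - m : ℕ) : ℤ) := by
  induction m with
  | zero => simp [Sw_zero]
  | succ m ih =>
    rw [Sw_succ, ih (by omega), Pc_dual ω n m (by omega),
      show n - m - 1 = n - (m + 1) by omega,
      show n - m = (n - (m + 1)) + 1 by omega, Sw_succ]
    ring

lemma theta_dual (ω : Om) (n j : ℕ) (h : j ≤ n) :
    theta (j : ℤ) (dual (n : ℤ) ω) = dual ((n - j : ℕ) : ℤ) ω := by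
  funext i
  simp only [theta, dual]
  congr 1
  omega

lemma enat_mem_of_sInf_eq {S : Set ℕ∞} {t : ℕ} (h : sInf S = (t : ℕ∞)) : (t : ℕ∞) ∈ S := by
  have hne : S.Nonempty := by
    by_contra he
    rw [Set.not_nonempty_iff_eq_empty] at he
    rw [he, sInf_empty] at h
    exact (ENat.coe_ne_top t) h.symm
  obtain ⟨m, hm, hmin⟩ := wellFounded_lt.has_min S hne
  have : sInf S = m :=
    le_antisymm (sInf_le hm) (le_sInf fun x hx => not_lt.mp (hmin x hx))
  rw [this] at h
  rwa [h] at hm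

end Aux

section LemA

lemma lemA : ∀ n : ℕ, ∀ ω : Om, ∀ j : ℕ, j < n →
    Sw ω (j : ℤ) ≤ Sw ω (n : ℤ) →
    (∀ r : ℕ, j < r → r < n → Sw ω (n : ℤ) < Sw ω (r : ℤ)) →
    spine ω n = spine ω j ++
      [upsilon (Sw ω ((j + 1 : ℕ) : ℤ) - Sw ω (n : ℤ)).toNat (Pc ω (j : ℤ))] := by
  intro n
  induction n using Nat.strong_induction_on with
  | _ n IH =>
    intro ω j hjn h1 h2
    obtain ⟨m, rfl⟩ : ∃ m, n = m + 1 := ⟨n - 1, by omega⟩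
    rcases eq_or_lt_of_le (Nat.lt_succ_iff.mp hjn) with hjm | hjm
    · -- j = m : a step up
      subst hjm
      have hc : Pc ω (j : ℤ) ≠ 0 := by
        intro h0
        have hs := Sw_succ ω j
        rw [h0, Multiset.card_zero] at hs
        omega
      rw [spine_succ, phiSp_ne _ _ hc, sub_self, Int.toNat_zero, upsilon_zero]
    · -- j < m : a step down
      have hSm : Sw ω ((m + 1 : ℕ) : ℤ) < Sw ω (m : ℤ) := h2 m hjm (by omega)
      have hPm : Pc ω (m : ℤ) = 0 := by
        have := Sw_succ ω m
        rw [← Multiset.card_eq_zero]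
        omega
      have hn : Sw ω ((m + 1 : ℕ) : ℤ) = Sw ω (m : ℤ) - 1 := by
        have := Sw_succ ω m
        rw [hPm] at this
        simpa [sub_eq_add_neg] using this
      have hspn : spine ω (m + 1) = phiSp (spine ω m) 0 := by
        rw [spine_succ, hPm]
      -- the last weak descending record before m
      set A : Set ℕ := {r | r < m ∧ Sw ω (r : ℤ) ≤ Sw ω (m : ℤ)} with hA
      have hbdd : BddAbove A := ⟨m, fun r hr => le_of_lt hr.1⟩
      have hjA : j ∈ A := ⟨hjm, by omega⟩
      set j' := sSup A with hj'
      have hj'A : j' ∈ A := Nat.sSup_mem ⟨j, hjA⟩ hbdd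
      have hmax : ∀ r, r ∈ A → r ≤ j' := fun r hr => le_csSup hbdd hr
      have hj'm : j' < m := hj'A.1
      have hj'S : Sw ω (j' : ℤ) ≤ Sw ω (m : ℤ) := hj'A.2
      have hjj' : j ≤ j' := hmax j hjA
      have hup : ∀ r : ℕ, j' < r → r < m → Sw ω (m : ℤ) < Sw ω (r : ℤ) := by
        intro r hr1 hr2
        by_contra hcon
        exact absurd (hmax r ⟨hr2, not_lt.mp hcon⟩) (by omega)
      have hIH := IH m (by omega) ω j' hj'm hj'S hup
      set z' : ℤ := Sw ω ((j' + 1 : ℕ) : ℤ) - Sw ω (m : ℤ) with hz'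
      set ν' : PtM := upsilon z'.toNat (Pc ω (j' : ℤ)) with hν'
      have hz'0 : 0 ≤ z' := by
        rw [hz']
        rcases Nat.lt_or_ge (j' + 1) m with hl | hg
        · have := hup (j' + 1) (by omega) hl
          omega
        · have he : j' + 1 = m := by omega
          rw [he]
          omega
      have hcard : (Multiset.card ν' : ℤ) = 1 + Sw ω (m : ℤ) - Sw ω (j' : ℤ) := by
        have hs := Sw_succ ω j'
        have hle : z'.toNat ≤ Multiset.card (Pc ω (j' : ℤ)) := by omega
        rw [hν', upsilon_card]
        omega
      by_cases hc : Sw ω (j' : ℤ) = Sw ω (m : ℤ)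
      · -- popped element dies: recurse through a modified environment
        have hcard1 : Multiset.card ν' < 2 := by omega
        have hjj2 : j < j' := by
          rcases eq_or_lt_of_le hjj' with he | hl
          · exfalso; rw [he] at h1; omega
          · exact hl
        set ω'' : Om := Function.update ω (j' : ℤ) ((ω (j' : ℤ)).1, 0) with hω''
        have hPcne : ∀ i : ℕ, i ≠ j' → Pc ω'' (i : ℤ) = Pc ω (i : ℤ) := by
          intro i hi
          rw [hω'', Pc, Pc, Function.update_of_ne (by exact_mod_cast hi)]
        have hPcj' : Pc ω'' (j' : ℤ) = 0 := by
          rw [hω'', Pc, Function.update_self]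
        have hspc : ∀ r : ℕ, r ≤ j' → spine ω'' r = spine ω r :=
          fun r hr => spine_congr _ _ _ (fun i hi => hPcne i (by omega))
        have hSwc : ∀ r : ℕ, r ≤ j' → Sw ω'' (r : ℤ) = Sw ω (r : ℤ) :=
          fun r hr => Sw_congr _ _ _ (fun i hi => hPcne i (by omega))
        have hSw1 : Sw ω'' ((j' + 1 : ℕ) : ℤ) = Sw ω ((m + 1 : ℕ) : ℤ) := by
          rw [Sw_succ, hPcj', hSwc j' le_rfl, hc, hn, Multiset.card_zero]
          push_cast
          ring
        have hch : spine ω (m + 1) = spine ω'' (j' + 1) := by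
          rw [hspn, hIH, phiSp_pop_small _ _ hcard1, spine_succ, hPcj',
            hspc j' le_rfl]
        have hIH2 := IH (j' + 1) (by omega) ω'' j (by omega)
          (by rw [hSwc j (by omega), hSw1]; exact h1)
          (by
            intro r hr1 hr2
            rw [hSw1, hSwc r (by omega)]
            exact h2 r hr1 (by omega))
        rw [hch, hIH2, hspc j (by omega), hSwc (j + 1) (by omega), hSw1,
          hPcne j (by omega)]
      · -- popped element survives: it loses one atom
        have hcS : Sw ω (j' : ℤ) < Sw ω (m : ℤ) := lt_of_le_of_ne hj'S hc
        have hjeq : j = j' := by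
          rcases eq_or_lt_of_le hjj' with he | hl
          · exact he
          · exfalso
            have := h2 j' hl (by omega)
            omega
        subst hjeq
        have hcard2 : 2 ≤ Multiset.card ν' := by omega
        rw [hspn, hIH, phiSp_pop_big _ _ hcard2, hν', upsilon_upsilon]
        have hexp : z'.toNat + 1 = (Sw ω ((j' + 1 : ℕ) : ℤ) - Sw ω ((m + 1 : ℕ) : ℤ)).toNat := by
          omega
        rw [hexp]

end LemA

section LemC

lemma lemC (ω : Om) (n j t : ℕ) (hjt : j < t) (htn : t ≤ n)
    (h1 : Sw (dual (n : ℤ) ω) (j : ℤ) ≤ Sw (dual (n : ℤ) ω) (t : ℤ))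
    (h2 : ∀ m : ℕ, j < m → Sw (dual (n : ℤ) ω) (j : ℤ) ≤ Sw (dual (n : ℤ) ω) (m : ℤ) → t ≤ m) :
    spine ω (n - j) = spine ω (n - t) ++ [muU (dual ((n - j : ℕ) : ℤ) ω) 0] := by
  have hjn : j ≤ n := by omega
  have hθ : theta (j : ℤ) (dual (n : ℤ) ω) = dual ((n - j : ℕ) : ℤ) ω := theta_dual ω n j hjn
  have hSw' : ∀ m : ℕ, Sw (dual ((n - j : ℕ) : ℤ) ω) (m : ℤ)
      = Sw (dual (n : ℤ) ω) ((j + m : ℕ) : ℤ) - Sw (dual (n : ℤ) ω) (j : ℤ) := by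
    intro m
    rw [← hθ, Sw_theta]
  have htau : tauUp (dual ((n - j : ℕ) : ℤ) ω) 0 = ((t - j : ℕ) : ℕ∞) := by
    apply le_antisymm
    · apply sInf_le
      refine ⟨t - j, rfl, by omega, ?_⟩
      rw [hSw', show j + (t - j) = t by omega]
      omega
    · apply le_sInf
      rintro x ⟨m, rfl, hm0, hmS⟩
      rw [hSw'] at hmS
      have := h2 (j + m) (by omega) (by omega)
      exact Nat.cast_le.mpr (by omega)
  have htauN : tauUpN (dual ((n - j : ℕ) : ℤ) ω) 0 = t - j := by
    unfold tauUpN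
    rw [htau]
    exact ENat.toNat_coe _
  have hPc : Pc (dual ((n - j : ℕ) : ℤ) ω) (((t - j : ℕ) : ℤ) - 1) = Pc ω ((n - t : ℕ) : ℤ) := by
    rw [show (((t - j : ℕ) : ℤ) - 1) = ((t - j - 1 : ℕ) : ℤ) by omega,
      Pc_dual ω (n - j) (t - j - 1) (by omega)]
    congr 2
    omega
  have hzeta : zetaU (dual ((n - j : ℕ) : ℤ) ω) 0
      = Sw ω ((n - t + 1 : ℕ) : ℤ) - Sw ω ((n - j : ℕ) : ℤ) := by
    unfold zetaU
    rw [htauN, show (((t - j : ℕ) : ℤ) - 1) = ((t - j - 1 : ℕ) : ℤ) by omega, hSw',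
      show j + (t - j - 1) = t - 1 by omega, Sw_dual ω n (t - 1) (by omega),
      Sw_dual ω n j hjn, show n - (t - 1) = n - t + 1 by omega]
    ring
  have hmu : muU (dual ((n - j : ℕ) : ℤ) ω) 0
      = upsilon (Sw ω ((n - t + 1 : ℕ) : ℤ) - Sw ω ((n - j : ℕ) : ℤ)).toNat
        (Pc ω ((n - t : ℕ) : ℤ)) := by
    unfold muU
    rw [hzeta, htauN, hPc]
  rw [hmu]
  have hd1 : Sw ω ((n - t : ℕ) : ℤ) ≤ Sw ω ((n - j : ℕ) : ℤ) := by
    rw [Sw_dual ω n j hjn, Sw_dual ω n t htn] at h1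
    omega
  have hd2 : ∀ r : ℕ, n - t < r → r < n - j → Sw ω ((n - j : ℕ) : ℤ) < Sw ω (r : ℤ) := by
    intro r hr1 hr2
    by_contra hcon
    push_neg at hcon
    rw [Sw_dual ω n j hjn] at h2
    have hm : Sw (dual (n : ℤ) ω) ((n - r : ℕ) : ℤ)
        = Sw ω (n : ℤ) - Sw ω (r : ℤ) := by
      rw [Sw_dual ω n (n - r) (by omega), show n - (n - r) = r by omega]
    have := h2 (n - r) (by omega) (by rw [hm]; omega)
    omega
  exact lemA (n - j) ω (n - t) (by omega) hd1 hd2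

end LemC


theorem stmt13 (ω : Om) (n k t : ℕ)
    (hT : ladderT (dual (n : ℤ) ω) k = (t : ℕ∞)) (htn : t ≤ n) :
    spine ω n
      = spine ω (n - t) ++ (List.range k).map (fun i => Qcal (dual (n : ℤ) ω) (k - i)) := by
  revert hT htn
  induction k generalizing t with
  | zero =>
    intro hT htn
    have h0 : ((0 : ℕ) : ℕ∞) = (t : ℕ∞) := hT
    have ht0 : t = 0 := by exact_mod_cast h0.symm
    subst ht0
    simp
  | succ k IH =>
    intro hT htn
    have heq : ladderT (dual (n : ℤ) ω) (k + 1)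
        = sInf {x : ℕ∞ | ∃ m j : ℕ, x = (m : ℕ∞) ∧ ladderT (dual (n : ℤ) ω) k = (j : ℕ∞) ∧
            j < m ∧ Sw (dual (n : ℤ) ω) (j : ℤ) ≤ Sw (dual (n : ℤ) ω) (m : ℤ)} := rfl
    rw [heq] at hT
    obtain ⟨m, j, htm, hkj, hjm, hS⟩ := enat_mem_of_sInf_eq hT
    have hmt : m = t := by exact_mod_cast htm.symm
    subst hmt
    have h2 : ∀ m' : ℕ, j < m' →
        Sw (dual (n : ℤ) ω) (j : ℤ) ≤ Sw (dual (n : ℤ) ω) (m' : ℤ) → m ≤ m' := by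
      intro m' hjm' hSm'
      have hx : ((m' : ℕ∞)) ∈ {x : ℕ∞ | ∃ m j : ℕ, x = (m : ℕ∞) ∧
          ladderT (dual (n : ℤ) ω) k = (j : ℕ∞) ∧
          j < m ∧ Sw (dual (n : ℤ) ω) (j : ℤ) ≤ Sw (dual (n : ℤ) ω) (m : ℤ)} :=
        ⟨m', j, rfl, hkj, hjm', hSm'⟩
      have := hT ▸ sInf_le hx
      exact_mod_cast this
    have hIH := IH j hkj (by omega)
    have hC := lemC ω n j m hjm htn hS h2
    have hQ : Qcal (dual (n : ℤ) ω) (k + 1) = muU (dual ((n - j : ℕ) : ℤ) ω) 0 := by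
      simp only [Qcal, Nat.add_sub_cancel, hkj, ENat.toNat_coe]
      rw [theta_dual ω n j (by omega)]
    have hlist : (List.range (k + 1)).map (fun i => Qcal (dual (n : ℤ) ω) (k + 1 - i))
        = Qcal (dual (n : ℤ) ω) (k + 1)
          :: (List.range k).map (fun i => Qcal (dual (n : ℤ) ω) (k - i)) := by
      rw [List.range_succ_eq_map, List.map_cons, List.map_map]
      simp [Function.comp, Nat.succ_sub_succ]
    rw [hIH, hC, hlist, hQ]
    simp

end
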